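/- There is no even perfect number in the Fibonacci sequence; equivalently, there are no positive integers n and prime p with 2^p - 1 prime such that F_n = 2^(p-1) * (2^p - 1). -/

import Mathlib

open ArithmeticFunction Finset
open scoped ArithmeticFunction.sigma

namespace NoEvenPerfectFibAux

theorem sigma_two_pow_eq_mersenne_succ (k : ℕ) : σ 1 (2 ^ k) = mersenne (k + 1) := by
  simp_rw [sigma_one_apply, mersenne, show 2 = 1 + 1 from rfl, ← geom_sum_mul_add 1 (k + 1)]
  norm_num

theorem ne_zero_of_prime_mersenne (k : ℕ) (pr : (mersenne (k + 1)).Prime) : k ≠ 0 := by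
  intro H
  simp [H, mersenne, Nat.not_prime_one] at pr

theorem eq_two_pow_mul_odd {n : ℕ} (hpos : 0 < n) : ∃ k m : ℕ, n = 2 ^ k * m ∧ ¬Even m := by
  have h := Nat.finiteMultiplicity_iff.2 ⟨Nat.prime_two.ne_one, hpos⟩
  cases' pow_multiplicity_dvd 2 n with m hm
  use multiplicity 2 n, m
  refine ⟨hm, ?_⟩
  rw [even_iff_two_dvd]
  have hg := h.not_pow_dvd_of_multiplicity_lt (Nat.lt_succ_self _)
  contrapose! hg
  rcases hg with ⟨k, rfl⟩
  apply Dvd.intro k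
  rw [pow_succ, mul_assoc, ← hm]

/-- Euler's theorem that even perfect numbers can be factored as a
  power of two times a Mersenne prime. -/
theorem eq_two_pow_mul_prime_mersenne_of_even_perfect {n : ℕ} (ev : Even n) (perf : Nat.Perfect n) :
    ∃ k : ℕ, Nat.Prime (mersenne (k + 1)) ∧ n = 2 ^ k * mersenne (k + 1) := by
  have hpos := perf.2
  rcases eq_two_pow_mul_odd hpos with ⟨k, m, rfl, hm⟩
  use k
  rw [even_iff_two_dvd] at hm
  rw [Nat.perfect_iff_sum_divisors_eq_two_mul hpos, ← sigma_one_apply,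
    isMultiplicative_sigma.map_mul_of_coprime (Nat.prime_two.coprime_pow_of_not_dvd hm).symm,
    sigma_two_pow_eq_mersenne_succ, ← mul_assoc, ← pow_succ'] at perf
  obtain ⟨j, rfl⟩ := ((Odd.coprime_two_right (by simp)).pow_right _).dvd_of_dvd_mul_left
    (Dvd.intro _ perf)
  rw [← mul_assoc, mul_comm _ (mersenne _), mul_assoc] at perf
  have h := mul_left_cancel₀ (by positivity) perf
  rw [sigma_one_apply, Nat.sum_divisors_eq_sum_properDivisors_add_self, ← succ_mersenne, add_mul,
    one_mul, add_comm] at h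
  have hj := add_left_cancel h
  cases Nat.sum_properDivisors_dvd (by rw [hj]; apply Dvd.intro_left (mersenne (k + 1)) rfl) with
  | inl h_1 =>
    have j1 : j = 1 := Eq.trans hj.symm h_1
    rw [j1, mul_one, Nat.sum_properDivisors_eq_one_iff_prime] at h_1
    simp [h_1, j1]
  | inr h_1 =>
    have jcon := Eq.trans hj.symm h_1
    rw [← one_mul j, ← mul_assoc, mul_one] at jcon
    have jcon2 := mul_right_cancel₀ ?_ jcon
    · exfalso
      match k with
      | 0 =>
        apply hm
        rw [← jcon2, pow_zero, one_mul, one_mul] at ev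
        rw [← jcon2, one_mul]
        exact even_iff_two_dvd.mp ev
      | .succ k =>
        apply ne_of_lt _ jcon2
        rw [mersenne, ← Nat.pred_eq_sub_one, Nat.lt_pred_iff, ← pow_one (Nat.succ 1)]
        apply pow_lt_pow_right₀ (Nat.lt_succ_self 1) (Nat.succ_lt_succ k.succ_pos)
    contrapose! hm
    simp [hm]

theorem fib_aux : ∀ n : ℕ, Nat.fib (n + 24) % 48 = Nat.fib n % 48 ∧
    Nat.fib (n + 25) % 48 = Nat.fib (n + 1) % 48 := by
  intro n
  induction n with
  | zero => exact ⟨by decide, by decide⟩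
  | succ n ih =>
    obtain ⟨h1, h2⟩ := ih
    refine ⟨by simpa [Nat.add_comm, Nat.add_assoc, Nat.add_left_comm] using h2, ?_⟩
    have e1 : Nat.fib (n + 24 + 2) = Nat.fib (n + 24) + Nat.fib (n + 24 + 1) :=
      Nat.fib_add_two
    have e2 : Nat.fib (n + 2) = Nat.fib n + Nat.fib (n + 1) := Nat.fib_add_two
    have g1 : n + 1 + 25 = n + 24 + 2 := by ring
    have g2 : n + 24 + 1 = n + 25 := by ring
    rw [g1, e1, g2, show n + 1 + 1 = n + 2 from rfl, e2]
    omega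

theorem fib_mod_48 (n : ℕ) : Nat.fib n % 48 = Nat.fib (n % 24) % 48 := by
  induction n using Nat.strong_induction_on with
  | _ n ih =>
    by_cases h : n < 24
    · rw [Nat.mod_eq_of_lt h]
    · have h24 : n - 24 + 24 = n := by omega
      have e : (n - 24 + 24) % 24 = (n - 24) % 24 := by omega
      rw [← h24, (fib_aux (n - 24)).1, ih (n - 24) (by omega), e]

theorem fib_mod_ne (n : ℕ) :
    Nat.fib n % 48 ≠ 6 ∧ Nat.fib n % 48 ≠ 16 ∧ Nat.fib n % 48 ≠ 28 := by
  rw [fib_mod_48]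
  have h : n % 24 < 24 := Nat.mod_lt _ (by norm_num)
  set r := n % 24 with hr
  clear_value r
  interval_cases r <;> refine ⟨by decide, by decide, by decide⟩

theorem pow_two_mod (m : ℕ) : 2 ^ (2 * m + 4) % 48 = 16 := by
  induction m with
  | zero => decide
  | succ m ih =>
    have : 2 * (m + 1) + 4 = (2 * m + 4) + 2 := by ring
    rw [this, pow_add]
    omega

theorem key (n p : ℕ) (hp : p.Prime) : Nat.fib n ≠ 2 ^ (p - 1) * (2 ^ p - 1) := by
  intro h
  obtain ⟨h6, h16, h28⟩ := fib_mod_ne n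
  rcases eq_or_ne p 2 with rfl | hp2
  · rw [h] at h6; exact h6 (by norm_num)
  rcases eq_or_ne p 3 with rfl | hp3
  · rw [h] at h28; exact h28 (by norm_num)
  · -- p is an odd prime ≥ 5
    have hodd : Odd p := hp.odd_of_ne_two hp2
    have hp5 : 5 ≤ p := by
      rcases hodd with ⟨t, rfl⟩
      have := hp.two_le
      omega
    obtain ⟨m, hm⟩ : ∃ m, p - 1 = 2 * m + 4 := by
      rcases hodd with ⟨t, ht⟩
      exact ⟨t - 2, by omega⟩
    have ha : 2 ^ (p - 1) % 48 = 16 := by rw [hm]; exact pow_two_mod m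
    have hpp : p = (p - 1) + 1 := by omega
    have hb : 2 ^ p % 48 = 32 := by
      rw [hpp, pow_succ]
      omega
    have hb1 : (2 ^ p - 1) % 48 = 31 := by
      have : 32 ≤ 2 ^ p := by
        calc (32 : ℕ) = 2 ^ 5 := by norm_num
        _ ≤ 2 ^ p := Nat.pow_le_pow_right (by norm_num) hp5
      omega
    apply h16
    rw [h, Nat.mul_mod, ha, hb1]

end NoEvenPerfectFibAux

theorem no_even_perfect_fib :
    (¬ ∃ n : ℕ, 0 < n ∧ Even (Nat.fib n) ∧ Nat.Perfect (Nat.fib n)) ∧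
      ¬ ∃ n p : ℕ, 0 < n ∧ p.Prime ∧ (2 ^ p - 1).Prime ∧
        Nat.fib n = 2 ^ (p - 1) * (2 ^ p - 1) := by
  constructor
  · rintro ⟨n, hn, hev, hperf⟩
    obtain ⟨k, hpr, heq⟩ :=
      NoEvenPerfectFibAux.eq_two_pow_mul_prime_mersenne_of_even_perfect hev hperf
    have hk : k ≠ 0 := NoEvenPerfectFibAux.ne_zero_of_prime_mersenne k hpr
    have hk1 : (k + 1).Prime := by
      have hmp : ((2 : ℕ) ^ (k + 1) - 1).Prime := by
        simpa [mersenne] using hpr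
      exact (Nat.prime_of_pow_sub_one_prime (by omega) hmp).2
    refine NoEvenPerfectFibAux.key n (k + 1) hk1 ?_
    simpa [mersenne] using heq
  · rintro ⟨n, p, hn, hp, _, heq⟩
    exact NoEvenPerfectFibAux.key n p hp heq
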